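/- Let X ⊆ ℂ be a measurable set with area(X) > 0, let r > 0 satisfy π r² = area(X), and write X₋ = X ∩ D_r, X₊ = X \ D_r, X_c = D_r \ X₋, where D_r is the open disc of radius r centered at 0. Then area(X₊) ≤ area(X_c), and for the map Q(w) = w^d one has area(Q⁻¹(X₊)) ≤ area(Q⁻¹(X_c)). -/

import Mathlib

open MeasureTheory Complex Set

noncomputable def groot (d : ℕ) (a : ℂ) : ℂ := Complex.exp (Complex.log a / d)

lemma groot_ne_zero (d : ℕ) (a : ℂ) : groot d a ≠ 0 := Complex.exp_ne_zero _

lemma groot_pow {d : ℕ} (hd : d ≠ 0) {a : ℂ} (ha : a ≠ 0) : (groot d a) ^ d = a := by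
  have hdc : (d : ℂ) ≠ 0 := Nat.cast_ne_zero.mpr hd
  rw [groot, ← Complex.exp_nat_mul]
  rw [mul_div_cancel₀ _ hdc, Complex.exp_log ha]

lemma groot_measurable (d : ℕ) : Measurable (groot d) :=
  Complex.measurable_exp.comp (Complex.measurable_log.div_const _)

lemma det_deriv (c : ℂ) :
    ((ContinuousLinearMap.smulRight (1 : ℂ →L[ℂ] ℂ) c).restrictScalars ℝ).det
      = Complex.normSq c := by
  have h : (((ContinuousLinearMap.smulRight (1 : ℂ →L[ℂ] ℂ) c).restrictScalars ℝ) :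
      ℂ →ₗ[ℝ] ℂ) = Algebra.lmul ℝ ℂ c := by
    ext z
    simp [mul_comm]
  rw [ContinuousLinearMap.det, h]
  rw [← Algebra.norm_apply, Algebra.norm_complex_apply]

lemma core (d : ℕ) (hd : d ≠ 0) (S : Set ℂ) (hS : MeasurableSet S) (hS0 : (0:ℂ) ∉ S) :
    volume ((fun w : ℂ => w ^ d) ⁻¹' S) = d * volume (groot d '' S) ∧
    (∫⁻ w in groot d '' S, ENNReal.ofReal (Complex.normSq ((d : ℂ) * w ^ (d-1))))
      = volume S := by
  haveI : NeZero d := ⟨hd⟩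
  set A : Set ℂ := groot d '' S with hA
  have hginj : InjOn (groot d) S := by
    intro a ha b hb h
    have := congrArg (· ^ d) h
    simpa [groot_pow hd (fun h0 => hS0 (h0 ▸ ha)), groot_pow hd (fun h0 => hS0 (h0 ▸ hb))]
      using this
  have hAmeas : MeasurableSet A :=
    hS.image_of_measurable_injOn (groot_measurable d) hginj
  have hQA : (fun w : ℂ => w ^ d) '' A = S := by
    ext a
    constructor
    · rintro ⟨w, ⟨b, hb, rfl⟩, rfl⟩
      show (groot d b) ^ d ∈ S
      rwa [groot_pow hd (fun h0 => hS0 (h0 ▸ hb))]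
    · intro ha
      exact ⟨groot d a, ⟨a, ha, rfl⟩, groot_pow hd (fun h0 => hS0 (h0 ▸ ha))⟩
  have hQinj : InjOn (fun w : ℂ => w ^ d) A := by
    rintro _ ⟨a, ha, rfl⟩ _ ⟨b, hb, rfl⟩ h
    simp only [groot_pow hd (fun h0 => hS0 (h0 ▸ ha)),
      groot_pow hd (fun h0 => hS0 (h0 ▸ hb))] at h
    rw [h]
  constructor
  · -- preimage as union of rotations
    set ζ : ℂ := Complex.exp (2 * Real.pi * Complex.I / d) with hζdef
    have hζ : IsPrimitiveRoot ζ d := Complex.isPrimitiveRoot_exp d hd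
    have hζ0 : ζ ≠ 0 := Complex.exp_ne_zero _
    have key : ∀ (m : ℕ) (c : ℂ), (ζ ^ m * c) ^ d = c ^ d := by
      intro m c
      rw [mul_pow, ← pow_mul, mul_comm m d, pow_mul, hζ.pow_eq_one, one_pow, one_mul]
    have hunion : (fun w : ℂ => w ^ d) ⁻¹' S
        = ⋃ k ∈ Finset.range d, (fun w => ζ ^ k * w) '' A := by
      ext w
      simp only [Set.mem_preimage, Set.mem_iUnion, Finset.mem_range]
      constructor
      · intro hw
        have ha0 : w ^ d ≠ 0 := fun h0 => hS0 (h0 ▸ hw)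
        have hu : (w / groot d (w ^ d)) ^ d = 1 := by
          rw [div_pow, groot_pow hd ha0, div_self ha0]
        obtain ⟨k, hk, hζk⟩ := hζ.eq_pow_of_pow_eq_one hu
        refine ⟨k, hk, groot d (w ^ d), ⟨w ^ d, hw, rfl⟩, ?_⟩
        show ζ ^ k * groot d (w ^ d) = w
        rw [hζk, div_mul_cancel₀ _ (groot_ne_zero d _)]
      · rintro ⟨k, hk, _, ⟨a, ha, rfl⟩, rfl⟩
        have ha0 : a ≠ 0 := fun h0 => hS0 (h0 ▸ ha)
        show (ζ ^ k * groot d a) ^ d ∈ S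
        rw [key, groot_pow hd ha0]
        exact ha
    have hmeas : ∀ k : ℕ, MeasurableSet ((fun w => ζ ^ k * w) '' A) := fun k =>
      hAmeas.image_of_measurable_injOn (measurable_const_mul _)
        (fun x _ y _ h => mul_left_cancel₀ (pow_ne_zero k hζ0) h)
    have hvol : ∀ k : ℕ, volume ((fun w => ζ ^ k * w) '' A) = volume A := by
      intro k
      have himg : (fun w : ℂ => ζ ^ k * w) '' A = (Algebra.lmul ℝ ℂ (ζ ^ k)) '' A := by
        congr 1
      rw [himg, Measure.addHaar_image_linearMap]
      have : LinearMap.det (Algebra.lmul ℝ ℂ (ζ ^ k)) = 1 := by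
        rw [← Algebra.norm_apply, Algebra.norm_complex_apply, Complex.normSq_eq_norm_sq]
        have : ‖ζ‖ = 1 := by
          rw [hζdef, Complex.norm_exp]
          norm_num
        rw [norm_pow, this, one_pow, one_pow]
      rw [this]
      simp
    have hdisj : (↑(Finset.range d) : Set ℕ).PairwiseDisjoint
        (fun k => (fun w => ζ ^ k * w) '' A) := by
      intro j hj k hk hjk
      simp only [Finset.coe_range, Set.mem_Iio] at hj hk
      refine Set.disjoint_left.mpr ?_
      rintro _ ⟨_, ⟨a, ha, rfl⟩, rfl⟩ ⟨_, ⟨b, hb, rfl⟩, hxy⟩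
      have ha0 : a ≠ 0 := fun h0 => hS0 (h0 ▸ ha)
      have hb0 : b ≠ 0 := fun h0 => hS0 (h0 ▸ hb)
      dsimp only at hxy
      -- hxy : ζ ^ k * groot d b = ζ ^ j * groot d a
      have hab : b = a := by
        have h2 := congrArg (· ^ d) hxy
        simp only [key] at h2
        rwa [groot_pow hd hb0, groot_pow hd ha0] at h2
      rw [hab] at hxy
      have : ζ ^ k = ζ ^ j := mul_right_cancel₀ (groot_ne_zero d _) hxy
      exact hjk (hζ.pow_inj hk hj this).symm
    rw [hunion, measure_biUnion_finset hdisj (fun k _ => hmeas k)]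
    simp [hvol, Finset.sum_const]
  · -- change of variables
    have hderiv : ∀ w ∈ A, HasFDerivWithinAt (fun w : ℂ => w ^ d)
        ((ContinuousLinearMap.smulRight (1 : ℂ →L[ℂ] ℂ) ((d : ℂ) * w ^ (d-1))).restrictScalars ℝ)
        A w := fun w _ =>
      ((hasDerivAt_pow d w).hasFDerivAt.restrictScalars ℝ).hasFDerivWithinAt
    have := lintegral_abs_det_fderiv_eq_addHaar_image volume hAmeas hderiv hQinj
    rw [hQA] at this
    rw [← this]
    refine setLIntegral_congr_fun hAmeas (fun w _ => ?_)
    rw [det_deriv, _root_.abs_of_nonneg (Complex.normSq_nonneg _)]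

theorem stmt_2 (d : ℕ) (hd : 1 ≤ d) (X : Set ℂ) (hX : MeasurableSet X)
    (hpos : 0 < volume X) (r : ℝ) (hr : 0 < r)
    (harea : ENNReal.ofReal (Real.pi * r ^ 2) = volume X) :
    volume (X \ Metric.ball (0 : ℂ) r) ≤
      volume (Metric.ball (0 : ℂ) r \ (X ∩ Metric.ball (0 : ℂ) r)) ∧
    volume ((fun w : ℂ => w ^ d) ⁻¹' (X \ Metric.ball (0 : ℂ) r)) ≤
      volume ((fun w : ℂ => w ^ d) ⁻¹' (Metric.ball (0 : ℂ) r \ (X ∩ Metric.ball (0 : ℂ) r))) := by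
  have hd0 : d ≠ 0 := by omega
  set B : Set ℂ := Metric.ball (0 : ℂ) r with hB
  have hBmeas : MeasurableSet B := measurableSet_ball
  have hvolB : volume B = volume X := by
    rw [← harea, hB, Complex.volume_ball]
    rw [show Real.pi * r ^ 2 = r ^ 2 * Real.pi by ring, ENNReal.ofReal_mul (by positivity),
      ENNReal.ofReal_pow hr.le]
    rw [← NNReal.coe_real_pi, ENNReal.ofReal_coe_nnreal]
  have hXBfin : volume (X ∩ B) ≠ ⊤ := by
    refine ne_top_of_le_ne_top ?_ (measure_mono Set.inter_subset_right)
    rw [hvolB, ← harea]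
    exact ENNReal.ofReal_ne_top
  have hpart1 : volume (X \ B) = volume (B \ (X ∩ B)) := by
    have h1 : volume (X \ B) = volume X - volume (X ∩ B) := by
      rw [← Set.diff_self_inter]
      exact measure_diff Set.inter_subset_left (hX.inter hBmeas).nullMeasurableSet hXBfin
    have h2 : volume (B \ (X ∩ B)) = volume B - volume (X ∩ B) :=
      measure_diff Set.inter_subset_right (hX.inter hBmeas).nullMeasurableSet hXBfin
    rw [h1, h2, hvolB]
  refine ⟨le_of_eq hpart1, ?_⟩
  -- second part
  set Xp : Set ℂ := X \ B with hXp
  set Xc : Set ℂ := B \ (X ∩ B) with hXc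
  have hXpmeas : MeasurableSet Xp := hX.diff hBmeas
  have hXp0 : (0:ℂ) ∉ Xp := fun h => h.2 (Metric.mem_ball_self hr)
  set Xc' : Set ℂ := Xc \ {0} with hXc'
  have hXc'meas : MeasurableSet Xc' := (hBmeas.diff (hX.inter hBmeas)).diff (measurableSet_singleton 0)
  have hXc'0 : (0:ℂ) ∉ Xc' := fun h => h.2 rfl
  have hXc'vol : volume Xc' = volume Xc := measure_diff_null (measure_singleton 0)
  obtain ⟨hp1, hp2⟩ := core d hd0 Xp hXpmeas hXp0
  obtain ⟨hc1, hc2⟩ := core d hd0 Xc' hXc'meas hXc'0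
  set ρ : ℝ := r ^ ((d : ℝ)⁻¹) with hρdef
  have hρpos : 0 < ρ := Real.rpow_pos_of_pos hr _
  have hρd : ρ ^ d = r := by
    rw [hρdef, ← Real.rpow_natCast (r ^ ((d:ℝ)⁻¹)) d, ← Real.rpow_mul hr.le,
      inv_mul_cancel₀ (by exact_mod_cast hd0 : (d:ℝ) ≠ 0), Real.rpow_one]
  set C : ENNReal := ENNReal.ofReal ((d : ℝ) ^ 2 * ρ ^ (2 * (d - 1))) with hC
  have hC0 : C ≠ 0 := by
    rw [hC]
    simp only [ne_eq, ENNReal.ofReal_eq_zero, not_le]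
    have : (0:ℝ) < (d:ℝ) := by exact_mod_cast Nat.pos_of_ne_zero hd0
    positivity
  have hCtop : C ≠ ⊤ := ENNReal.ofReal_ne_top
  -- abs of groot
  have habsg : ∀ a : ℂ, a ≠ 0 → ‖groot d a‖ ^ d = ‖a‖ := by
    intro a ha
    rw [← norm_pow, groot_pow hd0 ha]
  have hnormSq : ∀ w : ℂ, Complex.normSq ((d : ℂ) * w ^ (d - 1))
      = (d : ℝ) ^ 2 * ‖w‖ ^ (2 * (d - 1)) := by
    intro w
    rw [Complex.normSq_eq_norm_sq, norm_mul, norm_pow, Complex.norm_natCast, mul_pow, ← pow_mul,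
      mul_comm (d - 1) 2]
  -- lower bound on Xp integral
  have hboundp : C * volume (groot d '' Xp) ≤ volume Xp := by
    rw [← hp2, ← setLIntegral_const]
    refine setLIntegral_mono
      ((Complex.continuous_normSq.measurable.comp
        ((measurable_id.pow_const (d - 1)).const_mul _)).ennreal_ofReal) ?_
    rintro _ ⟨a, ha, rfl⟩
    have ha0 : a ≠ 0 := fun h0 => hXp0 (h0 ▸ ha)
    have habs : r ≤ ‖a‖ := by
      have : a ∉ B := ha.2
      simpa [hB, Metric.mem_ball, Complex.dist_eq, not_lt] using this
    have hwge : ρ ≤ ‖groot d a‖ := by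
      have h1 : ρ ^ d ≤ ‖groot d a‖ ^ d := by
        rw [hρd, habsg a ha0]; exact habs
      exact (pow_le_pow_iff_left₀ hρpos.le (norm_nonneg _) hd0).mp h1
    rw [hC, hnormSq]
    refine ENNReal.ofReal_le_ofReal ?_
    have := pow_le_pow_left₀ hρpos.le hwge (2 * (d - 1))
    nlinarith [sq_nonneg (d:ℝ)]
  -- upper bound on Xc' integral
  have hboundc : volume Xc' ≤ C * volume (groot d '' Xc') := by
    rw [← hc2, ← setLIntegral_const]
    refine setLIntegral_mono measurable_const ?_
    rintro _ ⟨a, ha, rfl⟩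
    have ha0 : a ≠ 0 := fun h0 => hXc'0 (h0 ▸ ha)
    have habs : ‖a‖ ≤ r := by
      have : a ∈ B := ha.1.1
      have := Metric.mem_ball.mp this
      rw [Complex.dist_eq, sub_zero] at this
      exact this.le
    have hwle : ‖groot d a‖ ≤ ρ := by
      have h1 : ‖groot d a‖ ^ d ≤ ρ ^ d := by
        rw [hρd, habsg a ha0]; exact habs
      exact (pow_le_pow_iff_left₀ (norm_nonneg _) hρpos.le hd0).mp h1
    rw [hC, hnormSq]
    refine ENNReal.ofReal_le_ofReal ?_
    have := pow_le_pow_left₀ (norm_nonneg _) hwle (2 * (d - 1))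
    nlinarith [sq_nonneg (d:ℝ)]
  have hAle : volume (groot d '' Xp) ≤ volume (groot d '' Xc') := by
    rw [← ENNReal.mul_le_mul_iff_right hC0 hCtop]
    calc C * volume (groot d '' Xp) ≤ volume Xp := hboundp
      _ ≤ volume Xc := hpart1.le
      _ = volume Xc' := hXc'vol.symm
      _ ≤ C * volume (groot d '' Xc') := hboundc
  calc volume ((fun w : ℂ => w ^ d) ⁻¹' Xp) = d * volume (groot d '' Xp) := hp1
    _ ≤ d * volume (groot d '' Xc') := by
        exact mul_le_mul_right hAle _
    _ = volume ((fun w : ℂ => w ^ d) ⁻¹' Xc') := hc1.symm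
    _ ≤ volume ((fun w : ℂ => w ^ d) ⁻¹' Xc) :=
        measure_mono (Set.preimage_mono Set.diff_subset)
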